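/- Let m : ℝ³ → ℝ³ be differentiable at a point with |m| > 0, and set w := ((|m| − 1)/|m|) m. Then for each i, ∂ᵢʰ w · ∂ᵢʰ m = ((|m| − 1)/|m|) |∂ᵢʰ m|² + |m|⁻³ (m · ∂ᵢʰ m)², where ∂ᵢʰ u := ∂ᵢ u − eᵢ × u. In particular, if |m| > 1 then ∂ᵢʰ w · ∂ᵢʰ m ≥ 0. -/

import Mathlib

open Matrix

noncomputable section

abbrev E3 := EuclideanSpace ℝ (Fin 3)

/-- The dot product on `ℝ³`. -/
def dot3 (a b : E3) : ℝ := inner ℝ a b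

/-- The cross product on `ℝ³`. -/
def cross3 (a b : E3) : E3 :=
  (WithLp.equiv 2 (Fin 3 → ℝ)).symm
    ![a 1 * b 2 - a 2 * b 1, a 2 * b 0 - a 0 * b 2, a 0 * b 1 - a 1 * b 0]

/-- The `i`-th standard basis vector of `ℝ³`. -/
def e3 (i : Fin 3) : E3 := EuclideanSpace.single i 1

/-- The `i`-th partial derivative of `u` at `x`. -/
def pderiv3 (u : E3 → E3) (i : Fin 3) (x : E3) : E3 := fderiv ℝ u x (e3 i)

/-- The `i`-th partial helical derivative `∂ᵢʰ u = ∂ᵢ u - eᵢ × u`. -/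
def hderiv (u : E3 → E3) (i : Fin 3) (x : E3) : E3 :=
  pderiv3 u i x - cross3 (e3 i) (u x)

lemma my_hasFDerivAt_norm {x : E3} (hx : x ≠ 0) :
    HasFDerivAt (fun y : E3 => ‖y‖) (‖x‖⁻¹ • innerSL ℝ x) x := by
  have hn : ‖x‖ ≠ 0 := norm_ne_zero_iff.mpr hx
  have h1 : HasFDerivAt (fun y : E3 => ‖y‖ ^ 2) (2 • innerSL ℝ x) x :=
    (hasStrictFDerivAt_norm_sq x).hasFDerivAt
  have h2 : HasDerivAt Real.sqrt (1 / (2 * Real.sqrt (‖x‖ ^ 2))) (‖x‖ ^ 2) :=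
    Real.hasDerivAt_sqrt (pow_ne_zero 2 hn)
  have h3 := h2.comp_hasFDerivAt x h1
  have hfun : (Real.sqrt ∘ fun y : E3 => ‖y‖ ^ 2) = fun y : E3 => ‖y‖ :=
    funext fun y => Real.sqrt_sq (norm_nonneg y)
  rw [hfun] at h3
  refine h3.congr_fderiv ?_
  rw [Real.sqrt_sq (norm_nonneg x)]
  ext v
  simp only [ContinuousLinearMap.smul_apply, smul_eq_mul, ContinuousLinearMap.coe_smul',
    Pi.smul_apply, nsmul_eq_mul, Nat.cast_ofNat]
  field_simp

lemma dot3_eq (a b : E3) : dot3 a b = a 0 * b 0 + a 1 * b 1 + a 2 * b 2 := by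
  simp [dot3, PiLp.inner_apply, RCLike.inner_apply, Fin.sum_univ_three]
  ring

lemma cross3_apply (a b : E3) (j : Fin 3) :
    cross3 a b j =
      ![a 1 * b 2 - a 2 * b 1, a 2 * b 0 - a 0 * b 2, a 0 * b 1 - a 1 * b 0] j := by
  rfl

lemma cross3_smul (a : E3) (c : ℝ) (b : E3) : cross3 a (c • b) = c • cross3 a b := by
  ext j
  fin_cases j <;>
    simp [cross3_apply, PiLp.smul_apply, smul_eq_mul] <;> ring

lemma dot3_cross3_self (v a : E3) : dot3 a (cross3 v a) = 0 := by
  rw [dot3_eq]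
  simp [cross3_apply]
  ring

theorem stmt18 (m : E3 → E3) (x : E3) (hm : DifferentiableAt ℝ m x)
    (hpos : 0 < ‖m x‖) (i : Fin 3) :
    dot3 (hderiv (fun y => ((‖m y‖ - 1) / ‖m y‖) • m y) i x) (hderiv m i x)
        = ((‖m x‖ - 1) / ‖m x‖) * ‖hderiv m i x‖ ^ 2
          + ‖m x‖ ^ (-(3 : ℤ)) * dot3 (m x) (hderiv m i x) ^ 2 ∧
    (1 < ‖m x‖ →
      0 ≤ dot3 (hderiv (fun y => ((‖m y‖ - 1) / ‖m y‖) • m y) i x) (hderiv m i x)) := by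
  have hn : ‖m x‖ ≠ 0 := ne_of_gt hpos
  have hmx : m x ≠ 0 := norm_ne_zero_iff.mp hn
  set n : ℝ := ‖m x‖ with hn_def
  -- derivative of y ↦ ‖m y‖
  have N : HasFDerivAt (fun y => ‖m y‖)
      ((n⁻¹ • innerSL ℝ (m x)).comp (fderiv ℝ m x)) x :=
    (my_hasFDerivAt_norm hmx).comp x hm.hasFDerivAt
  set N' : E3 →L[ℝ] ℝ := (n⁻¹ • innerSL ℝ (m x)).comp (fderiv ℝ m x) with hN'
  have C : HasFDerivAt (fun y => ‖m y‖ - 1) N' x := N.sub_const 1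
  have D : HasFDerivAt (fun y => (‖m y‖)⁻¹) ((-(n ^ 2)⁻¹) • N') x :=
    (hasDerivAt_inv hn).comp_hasFDerivAt x N
  have G : HasFDerivAt (fun y => (‖m y‖ - 1) * (‖m y‖)⁻¹)
      ((n - 1) • ((-(n ^ 2)⁻¹) • N') + n⁻¹ • N') x := C.mul D
  have hgfun : (fun y => (‖m y‖ - 1) / ‖m y‖) = fun y => (‖m y‖ - 1) * (‖m y‖)⁻¹ :=
    funext fun y => div_eq_mul_inv _ _
  set G' : E3 →L[ℝ] ℝ := (n - 1) • ((-(n ^ 2)⁻¹) • N') + n⁻¹ • N' with hG'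
  have G2 : HasFDerivAt (fun y => (‖m y‖ - 1) / ‖m y‖) G' x := by rw [hgfun]; exact G
  have F : HasFDerivAt (fun y => ((‖m y‖ - 1) / ‖m y‖) • m y)
      (((n - 1) / n) • fderiv ℝ m x + G'.smulRight (m x)) x := G2.smul hm.hasFDerivAt
  have hfd := F.fderiv
  -- abbreviations
  set P : E3 := fderiv ℝ m x (e3 i) with hP
  set h : E3 := hderiv m i x with hh
  have hq : N' (e3 i) = n⁻¹ * dot3 (m x) P := by
    simp [hN', dot3]
    exact Or.inl rfl
  have hsc : G' (e3 i) = (n ^ 3)⁻¹ * dot3 (m x) P := by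
    simp only [hG', ContinuousLinearMap.add_apply, ContinuousLinearMap.smul_apply,
      smul_eq_mul, hq]
    field_simp
    ring
  -- compute the helical derivative of the scaled function
  have key : hderiv (fun y => ((‖m y‖ - 1) / ‖m y‖) • m y) i x
      = ((n - 1) / n) • h + ((n ^ 3)⁻¹ * dot3 (m x) P) • m x := by
    rw [hderiv, pderiv3, hfd]
    simp only [ContinuousLinearMap.add_apply, ContinuousLinearMap.smul_apply,
      ContinuousLinearMap.smulRight_apply, hsc]
    rw [cross3_smul, hh, hderiv, pderiv3, smul_sub, ← hP]
    abel
  have hmh : dot3 (m x) h = dot3 (m x) P := by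
    rw [hh, hderiv, pderiv3, ← hP, dot3, inner_sub_right]
    have := dot3_cross3_self (e3 i) (m x)
    rw [dot3] at this
    rw [this, sub_zero, dot3]
  have hdot : dot3 (((n - 1) / n) • h + ((n ^ 3)⁻¹ * dot3 (m x) P) • m x) h
      = ((n - 1) / n) * ‖h‖ ^ 2 + (n ^ 3)⁻¹ * dot3 (m x) h ^ 2 := by
    rw [dot3, inner_add_left, real_inner_smul_left, real_inner_smul_left,
      real_inner_self_eq_norm_sq]
    have : (inner ℝ (m x) h : ℝ) = dot3 (m x) h := rfl
    rw [this, hmh]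
    ring
  have hzpow : n ^ (-(3 : ℤ)) = (n ^ 3)⁻¹ := by
    rw [_root_.zpow_neg, zpow_ofNat]
  have main : dot3 (hderiv (fun y => ((‖m y‖ - 1) / ‖m y‖) • m y) i x) (hderiv m i x)
      = ((n - 1) / n) * ‖h‖ ^ 2 + (n ^ 3)⁻¹ * dot3 (m x) h ^ 2 := by
    rw [key, ← hh, hdot]
  refine ⟨by rw [main, hzpow], fun h1 => ?_⟩
  rw [main]
  have hn0 : (0:ℝ) < n := hpos
  have t1 : 0 ≤ (n - 1) / n := div_nonneg (by linarith) hn0.le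
  exact add_nonneg (mul_nonneg t1 (sq_nonneg _))
    (mul_nonneg (inv_nonneg.mpr (by positivity)) (sq_nonneg _))
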